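/- Let B₀, B₁, B₂ and E₁ be functions rational at infinity, and let U be a domain contained in an annulus Ω(r) on which B₀, B₁, B₂, E₁ are analytic. Suppose u and v are linearly independent analytic solutions on U of the equation y‴ + B₂y″ + B₁y′ + B₀y = 0, and that their Wronskian W = uv′ − u′v satisfies W′ + E₁W = 0 on U. Then there exists a function E₀, rational at infinity, such that u and v both solve y″ + E₁y′ + E₀y = 0 on the part of U where E₀ is analytic. -/

import Mathlib

/-- A function is rational at infinity if it is analytic on some annulus
`Ω(r) = {z : r < |z|}` and has at most polynomial growth there
(equivalently, at most a pole at `∞`). -/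
def RationalAtInfinity (a : ℂ → ℂ) : Prop :=
  ∃ r : ℝ, 0 < r ∧ AnalyticOnNhd ℂ a {z : ℂ | r < ‖z‖} ∧
    ∃ (n : ℕ) (C : ℝ), ∀ z : ℂ, r < ‖z‖ →
      ‖a z‖ ≤ C * ‖z‖ ^ n

lemma ratinf_add {a b : ℂ → ℂ} (ha : RationalAtInfinity a) (hb : RationalAtInfinity b) :
    RationalAtInfinity (fun z => a z + b z) := by
  obtain ⟨r1, hr1, han, n1, C1, hC1⟩ := ha
  obtain ⟨r2, hr2, hbn, n2, C2, hC2⟩ := hb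
  refine ⟨max (max r1 r2) 1, lt_of_lt_of_le one_pos (le_max_right _ _), ?_,
    max n1 n2, |C1| + |C2|, ?_⟩
  · intro z hz
    exact (han z (lt_of_le_of_lt (le_max_left r1 r2) (lt_of_le_of_lt (le_max_left _ 1) hz))).add
      (hbn z (lt_of_le_of_lt (le_max_right r1 r2) (lt_of_le_of_lt (le_max_left _ 1) hz)))
  · intro z hz
    have ht1 : (1:ℝ) ≤ ‖z‖ := le_of_lt (lt_of_le_of_lt (le_max_right _ 1) hz)
    have hz1 : r1 < ‖z‖ := lt_of_le_of_lt (le_max_left r1 r2) (lt_of_le_of_lt (le_max_left _ 1) hz)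
    have hz2 : r2 < ‖z‖ := lt_of_le_of_lt (le_max_right r1 r2) (lt_of_le_of_lt (le_max_left _ 1) hz)
    have h1 : ‖a z‖ ≤ |C1| * ‖z‖ ^ max n1 n2 :=
      le_trans (hC1 z hz1) (mul_le_mul (le_abs_self C1)
        (pow_le_pow_right₀ ht1 (le_max_left n1 n2)) (by positivity) (abs_nonneg C1))
    have h2 : ‖b z‖ ≤ |C2| * ‖z‖ ^ max n1 n2 :=
      le_trans (hC2 z hz2) (mul_le_mul (le_abs_self C2)
        (pow_le_pow_right₀ ht1 (le_max_right n1 n2)) (by positivity) (abs_nonneg C2))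
    calc ‖a z + b z‖ ≤ ‖a z‖ + ‖b z‖ :=
          norm_add_le _ _
      _ ≤ (|C1| + |C2|) * ‖z‖ ^ max n1 n2 := by rw [add_mul]; exact add_le_add h1 h2

lemma ratinf_sub {a b : ℂ → ℂ} (ha : RationalAtInfinity a) (hb : RationalAtInfinity b) :
    RationalAtInfinity (fun z => a z - b z) := by
  obtain ⟨r1, hr1, han, n1, C1, hC1⟩ := ha
  obtain ⟨r2, hr2, hbn, n2, C2, hC2⟩ := hb
  refine ⟨max (max r1 r2) 1, lt_of_lt_of_le one_pos (le_max_right _ _), ?_,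
    max n1 n2, |C1| + |C2|, ?_⟩
  · intro z hz
    exact (han z (lt_of_le_of_lt (le_max_left r1 r2) (lt_of_le_of_lt (le_max_left _ 1) hz))).sub
      (hbn z (lt_of_le_of_lt (le_max_right r1 r2) (lt_of_le_of_lt (le_max_left _ 1) hz)))
  · intro z hz
    have ht1 : (1:ℝ) ≤ ‖z‖ := le_of_lt (lt_of_le_of_lt (le_max_right _ 1) hz)
    have hz1 : r1 < ‖z‖ := lt_of_le_of_lt (le_max_left r1 r2) (lt_of_le_of_lt (le_max_left _ 1) hz)
    have hz2 : r2 < ‖z‖ := lt_of_le_of_lt (le_max_right r1 r2) (lt_of_le_of_lt (le_max_left _ 1) hz)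
    have h1 : ‖a z‖ ≤ |C1| * ‖z‖ ^ max n1 n2 :=
      le_trans (hC1 z hz1) (mul_le_mul (le_abs_self C1)
        (pow_le_pow_right₀ ht1 (le_max_left n1 n2)) (by positivity) (abs_nonneg C1))
    have h2 : ‖b z‖ ≤ |C2| * ‖z‖ ^ max n1 n2 :=
      le_trans (hC2 z hz2) (mul_le_mul (le_abs_self C2)
        (pow_le_pow_right₀ ht1 (le_max_right n1 n2)) (by positivity) (abs_nonneg C2))
    calc ‖a z - b z‖ ≤ ‖a z‖ + ‖b z‖ :=
          by simpa using norm_sub_le (a z) (b z)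
      _ ≤ (|C1| + |C2|) * ‖z‖ ^ max n1 n2 := by rw [add_mul]; exact add_le_add h1 h2

lemma ratinf_mul {a b : ℂ → ℂ} (ha : RationalAtInfinity a) (hb : RationalAtInfinity b) :
    RationalAtInfinity (fun z => a z * b z) := by
  obtain ⟨r1, hr1, han, n1, C1, hC1⟩ := ha
  obtain ⟨r2, hr2, hbn, n2, C2, hC2⟩ := hb
  refine ⟨max r1 r2, lt_max_of_lt_left hr1, ?_, n1 + n2, |C1| * |C2|, ?_⟩
  · intro z hz
    exact (han z (lt_of_le_of_lt (le_max_left r1 r2) hz)).mul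
      (hbn z (lt_of_le_of_lt (le_max_right r1 r2) hz))
  · intro z hz
    have hz1 : r1 < ‖z‖ := lt_of_le_of_lt (le_max_left r1 r2) hz
    have hz2 : r2 < ‖z‖ := lt_of_le_of_lt (le_max_right r1 r2) hz
    have h1 : ‖a z‖ ≤ |C1| * ‖z‖ ^ n1 :=
      le_trans (hC1 z hz1) (mul_le_mul_of_nonneg_right (le_abs_self C1) (by positivity))
    have h2 : ‖b z‖ ≤ |C2| * ‖z‖ ^ n2 :=
      le_trans (hC2 z hz2) (mul_le_mul_of_nonneg_right (le_abs_self C2) (by positivity))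
    calc ‖a z * b z‖ = ‖a z‖ * ‖b z‖ := norm_mul _ _
      _ ≤ (|C1| * ‖z‖ ^ n1) * (|C2| * ‖z‖ ^ n2) :=
          mul_le_mul h1 h2 (norm_nonneg _) (by positivity)
      _ = |C1| * |C2| * ‖z‖ ^ (n1 + n2) := by rw [pow_add]; ring

lemma ratinf_deriv {a : ℂ → ℂ} (ha : RationalAtInfinity a) :
    RationalAtInfinity (deriv a) := by
  obtain ⟨r1, hr1, han, n, C, hC⟩ := ha
  refine ⟨2 * r1 + 2, by linarith, ?_, n, |C| * 2 ^ n, ?_⟩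
  · intro z hz
    exact han.deriv z (by simp only [Set.mem_setOf_eq] at hz ⊢; linarith)
  · intro z hz
    have ht1 : (1:ℝ) ≤ ‖z‖ := by linarith
    have hsub : ∀ w : ℂ, dist w z ≤ 1 → r1 < ‖w‖ := by
      intro w hw
      have : ‖z‖ - ‖w‖ ≤ ‖z - w‖ := by
        simpa using norm_sub_norm_le z w
      rw [dist_comm] at hw
      rw [Complex.dist_eq] at hw
      linarith
    have hd : DiffContOnCl ℂ a (Metric.ball z 1) := by
      constructor
      · intro w hw
        exact ((han w (hsub w (le_of_lt (Metric.mem_ball.mp hw)))).differentiableAt).differentiableWithinAt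
      · intro w hw
        have hw' : dist w z ≤ 1 := by
          have := Metric.closure_ball_subset_closedBall hw
          simpa [Metric.mem_closedBall] using this
        exact ((han w (hsub w hw')).continuousAt).continuousWithinAt
    have key := Complex.norm_deriv_le_of_forall_mem_sphere_norm_le one_pos hd
      (C := |C| * (2 * ‖z‖) ^ n) ?_
    · rw [div_one] at key
      calc ‖deriv a z‖ ≤ |C| * (2 * ‖z‖) ^ n := key
        _ = |C| * 2 ^ n * ‖z‖ ^ n := by rw [mul_pow]; ring
    · intro w hw
      have hw1 : dist w z = 1 := by simpa [Metric.mem_sphere, Complex.dist_eq] using hw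
      have hwr : r1 < ‖w‖ := hsub w (le_of_eq hw1)
      have hwz : ‖w‖ ≤ ‖z‖ + 1 := by
        have : ‖w‖ - ‖z‖ ≤ ‖w - z‖ := by
          simpa using norm_sub_norm_le w z
        rw [Complex.dist_eq] at hw1
        linarith
      have hbd : ‖a w‖ ≤ C * ‖w‖ ^ n := hC w hwr
      calc ‖a w‖ = ‖a w‖ := rfl
        _ ≤ C * ‖w‖ ^ n := hbd
        _ ≤ |C| * (2 * ‖z‖) ^ n := by
            apply mul_le_mul (le_abs_self C) _ (by positivity) (abs_nonneg C)
            exact pow_le_pow_left₀ (norm_nonneg w) (by linarith) n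

/-- Lemma 3.4: if `u, v` are linearly independent solutions of a
third order equation with coefficients rational at infinity, and their Wronskian
`W = uv' − u'v` satisfies `W' + E₁W = 0` with `E₁` rational at infinity, then
`u` and `v` solve a common second order equation `y'' + E₁y' + E₀y = 0` with
`E₀` rational at infinity. -/
theorem wronskian_first_order_implies_second_order_equation
    (B₀ B₁ B₂ E₁ : ℂ → ℂ)
    (hB₀ : RationalAtInfinity B₀) (hB₁ : RationalAtInfinity B₁)
    (hB₂ : RationalAtInfinity B₂) (hE₁ : RationalAtInfinity E₁)
    (r : ℝ) (hr : 0 < r) (U : Set ℂ) (hUo : IsOpen U) (hUc : IsConnected U)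
    (hUsub : U ⊆ {z : ℂ | r < ‖z‖})
    (hB₀U : AnalyticOnNhd ℂ B₀ U) (hB₁U : AnalyticOnNhd ℂ B₁ U)
    (hB₂U : AnalyticOnNhd ℂ B₂ U) (hE₁U : AnalyticOnNhd ℂ E₁ U)
    (u v : ℂ → ℂ) (hu : AnalyticOnNhd ℂ u U) (hv : AnalyticOnNhd ℂ v U)
    (hueq : ∀ z ∈ U, iteratedDeriv 3 u z + B₂ z * iteratedDeriv 2 u z
        + B₁ z * deriv u z + B₀ z * u z = 0)
    (hveq : ∀ z ∈ U, iteratedDeriv 3 v z + B₂ z * iteratedDeriv 2 v z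
        + B₁ z * deriv v z + B₀ z * v z = 0)
    (hindep : ∀ c₁ c₂ : ℂ, (∀ z ∈ U, c₁ * u z + c₂ * v z = 0) → c₁ = 0 ∧ c₂ = 0)
    (hW : ∀ z ∈ U, deriv (fun w => u w * deriv v w - deriv u w * v w) z
        + E₁ z * (u z * deriv v z - deriv u z * v z) = 0) :
    ∃ E₀ : ℂ → ℂ, RationalAtInfinity E₀ ∧
      ∀ z ∈ U, AnalyticAt ℂ E₀ z →
        iteratedDeriv 2 u z + E₁ z * deriv u z + E₀ z * u z = 0 ∧
        iteratedDeriv 2 v z + E₁ z * deriv v z + E₀ z * v z = 0 := by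
  classical
  obtain ⟨hUne, hUpre⟩ := hUc
  obtain ⟨E₀, hE₀f, hE₀z⟩ :
      ∃ E₀ : ℂ → ℂ, E₀ = (fun z => B₁ z - deriv E₁ z + E₁ z * E₁ z - E₁ z * B₂ z) ∧
        ∀ z, E₀ z = B₁ z - deriv E₁ z + E₁ z * E₁ z - E₁ z * B₂ z :=
    ⟨_, rfl, fun z => rfl⟩
  have hE₀rat : RationalAtInfinity E₀ := by
    rw [hE₀f]
    exact ratinf_sub (ratinf_add (ratinf_sub hB₁ (ratinf_deriv hE₁)) (ratinf_mul hE₁ hE₁))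
      (ratinf_mul hE₁ hB₂)
  have hu1 : AnalyticOnNhd ℂ (deriv u) U := hu.deriv
  have hu2 : AnalyticOnNhd ℂ (deriv (deriv u)) U := hu1.deriv
  have hv1 : AnalyticOnNhd ℂ (deriv v) U := hv.deriv
  have hv2 : AnalyticOnNhd ℂ (deriv (deriv v)) U := hv1.deriv
  have hE₁d : AnalyticOnNhd ℂ (deriv E₁) U := hE₁U.deriv
  have hE₀U : AnalyticOnNhd ℂ E₀ U := by
    rw [hE₀f]
    exact fun z hz =>
      (((hB₁U z hz).sub (hE₁d z hz)).add ((hE₁U z hz).mul (hE₁U z hz))).sub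
        ((hE₁U z hz).mul (hB₂U z hz))
  obtain ⟨g, hgf, hgdef⟩ :
      ∃ g : ℂ → ℂ, g = (fun z => deriv (deriv u) z + E₁ z * deriv u z + E₀ z * u z) ∧
        ∀ z, g z = deriv (deriv u) z + E₁ z * deriv u z + E₀ z * u z :=
    ⟨_, rfl, fun z => rfl⟩
  obtain ⟨h, hhf, hhdef⟩ :
      ∃ h : ℂ → ℂ, h = (fun z => deriv (deriv v) z + E₁ z * deriv v z + E₀ z * v z) ∧
        ∀ z, h z = deriv (deriv v) z + E₁ z * deriv v z + E₀ z * v z :=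
    ⟨_, rfl, fun z => rfl⟩
  have hgU : AnalyticOnNhd ℂ g U := by
    rw [hgf]
    exact fun z hz => ((hu2 z hz).add ((hE₁U z hz).mul (hu1 z hz))).add
      ((hE₀U z hz).mul (hu z hz))
  have hhU : AnalyticOnNhd ℂ h U := by
    rw [hhf]
    exact fun z hz => ((hv2 z hz).add ((hE₁U z hz).mul (hv1 z hz))).add
      ((hE₀U z hz).mul (hv z hz))
  have hit2u : iteratedDeriv 2 u = deriv (deriv u) := by
    rw [iteratedDeriv_succ, iteratedDeriv_one]
  have hit3u : iteratedDeriv 3 u = deriv (deriv (deriv u)) := by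
    rw [iteratedDeriv_succ, iteratedDeriv_succ, iteratedDeriv_one]
  have hit2v : iteratedDeriv 2 v = deriv (deriv v) := by
    rw [iteratedDeriv_succ, iteratedDeriv_one]
  have hit3v : iteratedDeriv 3 v = deriv (deriv (deriv v)) := by
    rw [iteratedDeriv_succ, iteratedDeriv_succ, iteratedDeriv_one]
  have hueq' : ∀ z ∈ U, deriv (deriv (deriv u)) z + B₂ z * deriv (deriv u) z
      + B₁ z * deriv u z + B₀ z * u z = 0 := by
    intro z hz; have hh := hueq z hz; rwa [hit2u, hit3u] at hh
  have hveq' : ∀ z ∈ U, deriv (deriv (deriv v)) z + B₂ z * deriv (deriv v) z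
      + B₁ z * deriv v z + B₀ z * v z = 0 := by
    intro z hz; have hh := hveq z hz; rwa [hit2v, hit3v] at hh
  -- derivative of the Wronskian
  have hWd : ∀ z ∈ U, deriv (fun w => u w * deriv v w - deriv u w * v w) z
      = u z * deriv (deriv v) z - deriv (deriv u) z * v z := by
    intro z hz
    have du := (hu z hz).differentiableAt
    have dv := (hv z hz).differentiableAt
    have du1 := (hu1 z hz).differentiableAt
    have dv1 := (hv1 z hz).differentiableAt
    rw [deriv_fun_sub (du.fun_mul dv1) (du1.fun_mul dv), deriv_fun_mul du dv1, deriv_fun_mul du1 dv]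
    ring
  -- u·h - v·g = 0 on U
  have e3 : ∀ z ∈ U, u z * h z - v z * g z = 0 := by
    intro z hz
    have hWz := hW z hz
    rw [hWd z hz] at hWz
    rw [hgdef z, hhdef z]
    linear_combination hWz
  -- first order ODEs for g and h
  have hdg : ∀ z ∈ U, deriv g z = (E₁ z - B₂ z) * g z
      + (deriv E₀ z - B₀ z - (E₁ z - B₂ z) * E₀ z) * u z := by
    intro z hz
    have d0 := (hu z hz).differentiableAt
    have d1 := (hu1 z hz).differentiableAt
    have d2 := (hu2 z hz).differentiableAt
    have dE1 := (hE₁U z hz).differentiableAt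
    have dE0 := (hE₀U z hz).differentiableAt
    have key : deriv g z
        = deriv (fun w => deriv (deriv u) w + E₁ w * deriv u w + E₀ w * u w) z := by
      rw [hgf]
    rw [key, deriv_fun_add (d2.fun_add (dE1.fun_mul d1)) (dE0.fun_mul d0), deriv_fun_add d2 (dE1.fun_mul d1),
      deriv_fun_mul dE1 d1, deriv_fun_mul dE0 d0, hgdef z]
    linear_combination hueq' z hz + deriv u z * hE₀z z
  have hdh : ∀ z ∈ U, deriv h z = (E₁ z - B₂ z) * h z
      + (deriv E₀ z - B₀ z - (E₁ z - B₂ z) * E₀ z) * v z := by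
    intro z hz
    have d0 := (hv z hz).differentiableAt
    have d1 := (hv1 z hz).differentiableAt
    have d2 := (hv2 z hz).differentiableAt
    have dE1 := (hE₁U z hz).differentiableAt
    have dE0 := (hE₀U z hz).differentiableAt
    have key : deriv h z
        = deriv (fun w => deriv (deriv v) w + E₁ w * deriv v w + E₀ w * v w) z := by
      rw [hhf]
    rw [key, deriv_fun_add (d2.fun_add (dE1.fun_mul d1)) (dE0.fun_mul d0), deriv_fun_add d2 (dE1.fun_mul d1),
      deriv_fun_mul dE1 d1, deriv_fun_mul dE0 d0, hhdef z]
    linear_combination hveq' z hz + deriv v z * hE₀z z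
  -- u'·h - v'·g = 0 on U
  have e7 : ∀ z ∈ U, deriv u z * h z - deriv v z * g z = 0 := by
    intro z hz
    have du := (hu z hz).differentiableAt
    have dv := (hv z hz).differentiableAt
    have dg := (hgU z hz).differentiableAt
    have dh := (hhU z hz).differentiableAt
    have hzero : deriv (fun w => u w * h w - v w * g w) z = 0 := by
      have hev : (fun w => u w * h w - v w * g w) =ᶠ[nhds z] (fun _ => (0 : ℂ)) := by
        filter_upwards [hUo.mem_nhds hz] with w hw using e3 w hw
      rw [hev.deriv_eq]; exact deriv_const z 0
    rw [deriv_fun_sub (du.fun_mul dh) (dv.fun_mul dg), deriv_fun_mul du dh, deriv_fun_mul dv dg] at hzero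
    linear_combination hzero - u z * hdh z hz + v z * hdg z hz - (E₁ z - B₂ z) * e3 z hz
  -- W·g = 0 and W·h = 0 on U
  have e8g : ∀ z ∈ U, (u z * deriv v z - deriv u z * v z) * g z = 0 := by
    intro z hz
    linear_combination deriv u z * e3 z hz - u z * e7 z hz
  have e8h : ∀ z ∈ U, (u z * deriv v z - deriv u z * v z) * h z = 0 := by
    intro z hz
    linear_combination deriv v z * e3 z hz - v z * e7 z hz
  obtain ⟨Wf, hWff, hWfdef⟩ :
      ∃ Wf : ℂ → ℂ, Wf = (fun w => u w * deriv v w - deriv u w * v w) ∧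
        ∀ w, Wf w = u w * deriv v w - deriv u w * v w :=
    ⟨_, rfl, fun w => rfl⟩
  have hWfU : AnalyticOnNhd ℂ Wf U := by
    rw [hWff]
    exact fun z hz => ((hu z hz).mul (hv1 z hz)).sub ((hu1 z hz).mul (hv z hz))
  -- the Wronskian is not identically zero on U
  have hWne : ¬ (∀ z ∈ U, Wf z = 0) := by
    intro hW0
    have hune : ∃ z₀ ∈ U, u z₀ ≠ 0 := by
      by_contra hcon
      push_neg at hcon
      have h1 := (hindep 1 0 (fun z hz => by rw [hcon z hz]; ring)).1
      exact one_ne_zero h1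
    obtain ⟨z₀, hz₀U, hz₀⟩ := hune
    set c := v z₀ / u z₀ with hc
    have hfan : AnalyticOnNhd ℂ (fun w => v w - c * u w) U := fun z hz =>
      (hv z hz).sub (analyticAt_const.mul (hu z hz))
    have hne : ∀ᶠ w in nhds z₀, u w ≠ 0 :=
      ((hu z₀ hz₀U).continuousAt).eventually_ne hz₀
    have hUev : ∀ᶠ w in nhds z₀, w ∈ U := hUo.mem_nhds hz₀U
    obtain ⟨ε, hε, hball⟩ := Metric.eventually_nhds_iff_ball.mp (hne.and hUev)
    have hq0 : ∀ w ∈ Metric.ball z₀ ε, HasDerivAt (fun x => (v x - c * u x) / u x) 0 w := by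
      intro w hw
      obtain ⟨hwne, hwU⟩ := hball w hw
      have hdu : HasDerivAt u (deriv u w) w := ((hu w hwU).differentiableAt).hasDerivAt
      have hdv : HasDerivAt v (deriv v w) w := ((hv w hwU).differentiableAt).hasDerivAt
      have hdf : HasDerivAt (fun x => v x - c * u x) (deriv v w - c * deriv u w) w :=
        hdv.sub (hdu.const_mul c)
      have h2 := hdf.div hdu hwne
      have hWw := hW0 w hwU
      rw [hWfdef w] at hWw
      have hnum : (deriv v w - c * deriv u w) * u w - (v w - c * u w) * deriv u w = 0 := by
        linear_combination hWw
      rw [hnum, zero_div] at h2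
      exact h2
    have hqconst : ∀ w ∈ Metric.ball z₀ ε,
        (v w - c * u w) / u w = (v z₀ - c * u z₀) / u z₀ := by
      intro w hw
      refine (convex_ball z₀ ε).is_const_of_fderivWithin_eq_zero
        (fun x hx => ((hq0 x hx).differentiableAt).differentiableWithinAt) ?_ hw
        (Metric.mem_ball_self hε)
      intro x hx
      have hfd := (((hq0 x hx).hasFDerivAt).hasFDerivWithinAt).fderivWithin
        (Metric.isOpen_ball.uniqueDiffWithinAt hx)
      rw [hfd]
      ext y
      simp
    have hfz₀ : (v z₀ - c * u z₀) / u z₀ = 0 := by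
      rw [hc]; field_simp; ring
    have hfball : ∀ w ∈ Metric.ball z₀ ε, v w - c * u w = 0 := by
      intro w hw
      have h1 := hqconst w hw
      rw [hfz₀] at h1
      obtain ⟨hwne, _⟩ := hball w hw
      exact (div_eq_zero_iff.mp h1).resolve_right hwne
    have hfU : Set.EqOn (fun w => v w - c * u w) 0 U :=
      hfan.eqOn_zero_of_preconnected_of_eventuallyEq_zero hUpre hz₀U
        (by filter_upwards [Metric.ball_mem_nhds z₀ hε] with w hw using hfball w hw)
    have h2 := (hindep (-c) 1 (fun z hz => by
      have h0 := hfU hz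
      simp only [Pi.zero_apply] at h0
      linear_combination h0)).2
    exact one_ne_zero h2
  push_neg at hWne
  obtain ⟨z₁, hz₁U, hz₁⟩ := hWne
  -- g ≡ 0 and h ≡ 0 on U by the identity theorem
  have hgzero : ∀ z ∈ U, g z = 0 := by
    by_contra hcon
    push_neg at hcon
    obtain ⟨z₂, hz₂U, hz₂⟩ := hcon
    have hne : ∀ᶠ w in nhds z₂, g w ≠ 0 := ((hgU z₂ hz₂U).continuousAt).eventually_ne hz₂
    have hWev : Wf =ᶠ[nhds z₂] 0 := by
      filter_upwards [hne, hUo.mem_nhds hz₂U] with w h1 h2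
      have h3 := e8g w h2
      show Wf w = 0
      rw [hWfdef w]
      exact (mul_eq_zero.mp h3).resolve_right h1
    have h4 := hWfU.eqOn_zero_of_preconnected_of_eventuallyEq_zero hUpre hz₂U hWev hz₁U
    exact hz₁ (by simpa using h4)
  have hhzero : ∀ z ∈ U, h z = 0 := by
    by_contra hcon
    push_neg at hcon
    obtain ⟨z₂, hz₂U, hz₂⟩ := hcon
    have hne : ∀ᶠ w in nhds z₂, h w ≠ 0 := ((hhU z₂ hz₂U).continuousAt).eventually_ne hz₂
    have hWev : Wf =ᶠ[nhds z₂] 0 := by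
      filter_upwards [hne, hUo.mem_nhds hz₂U] with w h1 h2
      have h3 := e8h w h2
      show Wf w = 0
      rw [hWfdef w]
      exact (mul_eq_zero.mp h3).resolve_right h1
    have h4 := hWfU.eqOn_zero_of_preconnected_of_eventuallyEq_zero hUpre hz₂U hWev hz₁U
    exact hz₁ (by simpa using h4)
  refine ⟨E₀, hE₀rat, fun z hz _ => ⟨?_, ?_⟩⟩
  · rw [hit2u]
    have h0 := hgzero z hz
    rw [hgdef z] at h0
    exact h0
  · rw [hit2v]
    have h0 := hhzero z hz
    rw [hhdef z] at h0
    exact h0
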